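/- arXiv:2601.15627 — 3 statements merged into one kernel-verified Lean document; each statement's English description precedes it below -/
import Mathlib

section
/- Let {η_i} be independent square-integrable real random variables and S_x = Σ_{i=1}^x η_i. If Var[S_x] → ∞ as x → ∞, then for every ε > 0, (S_x - E[S_x])/(Var[S_x])^{1/2+ε} → 0 almost surely. -/
open MeasureTheory ProbabilityTheory Filter

section Aux
open Finset
/-- Kronecker's lemma. -/
lemma aux_kronecker {a b : ℕ → ℝ} (hb : Monotone b) (hb1 : ∀ n, 1 ≤ b n)
    (hbtop : Tendsto b atTop atTop) {L : ℝ}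
    (h : Tendsto (fun n => ∑ i ∈ Finset.range n, a i / b i) atTop (nhds L)) :
    Tendsto (fun n => (∑ i ∈ Finset.range (n + 1), a i) / b n) atTop (nhds 0) := by
  set u : ℕ → ℝ := fun n => ∑ i ∈ Finset.range n, a i / b i with hu
  have hbpos : ∀ n, (0:ℝ) < b n := fun n => lt_of_lt_of_le one_pos (hb1 n)
  set d : ℕ → ℝ := fun i => b (i + 1) - b i with hd
  have hdnn : ∀ i, 0 ≤ d i := fun i => sub_nonneg.2 (hb (Nat.le_succ i))
  have hdsum : ∀ n, ∑ i ∈ Finset.range n, d i = b n - b 0 := fun n =>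
    Finset.sum_range_sub b n
  -- Claim A : weighted averages of u (i+1) tend to L
  have hA : Tendsto (fun m => (∑ i ∈ Finset.range m, d i * u (i + 1)) / b m) atTop (nhds L) := by
    have h1 : (fun i => d i * (u (i + 1) - L)) =o[atTop] d := by
      have h2 : (fun i : ℕ => u (i + 1) - L) =o[atTop] (fun _ => (1:ℝ)) := by
        rw [Asymptotics.isLittleO_one_iff]
        have := (h.comp (tendsto_add_atTop_nat 1)).sub_const L
        rw [sub_self] at this
        exact this
      simpa using (Asymptotics.isBigO_refl d atTop).mul_isLittleO h2
    have hdtop : Tendsto (fun n => ∑ i ∈ Finset.range n, d i) atTop atTop := by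
      simp only [hdsum]
      exact tendsto_atTop_add_const_right _ _ hbtop
    have h3 := h1.sum_range hdnn hdtop
    have h4 : (fun m => ∑ i ∈ Finset.range m, d i * (u (i + 1) - L)) =o[atTop] b := by
      refine h3.trans_isBigO (Asymptotics.isBigO_of_le _ fun m => ?_)
      rw [hdsum]
      rw [Real.norm_eq_abs, Real.norm_eq_abs, abs_of_nonneg (sub_nonneg.2 (hb (Nat.zero_le m))),
        abs_of_nonneg (hbpos m).le]
      linarith [hb1 0]
    have h5 : Tendsto (fun m => (∑ i ∈ Finset.range m, d i * (u (i + 1) - L)) / b m)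
        atTop (nhds 0) := h4.tendsto_div_nhds_zero
    have h6 : Tendsto (fun m => (b m - b 0) / b m * L) atTop (nhds L) := by
      have : Tendsto (fun m => (b m - b 0) / b m) atTop (nhds 1) := by
        have h7 : Tendsto (fun m => 1 - b 0 / b m) atTop (nhds 1) := by
          have h8 : Tendsto (fun m => b 0 / b m) atTop (nhds 0) :=
            Tendsto.div_atTop (tendsto_const_nhds (x := b 0) (f := atTop)) hbtop
          have := (tendsto_const_nhds (x := (1:ℝ)) (f := atTop)).sub h8
          simpa using this
        refine h7.congr fun m => ?_
        rw [sub_div, div_self (hbpos m).ne']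
      simpa using this.mul_const L
    have := h5.add h6
    rw [zero_add] at this
    refine this.congr fun m => ?_
    simp only [mul_sub]
    rw [Finset.sum_sub_distrib, sub_div, ← Finset.sum_mul, hdsum, sub_mul, div_mul_eq_mul_div]
    ring
  -- Abel summation
  have hAbel : ∀ n, ∑ i ∈ Finset.range (n + 1), a i
      = b n * u (n + 1) - ∑ i ∈ Finset.range n, d i * u (i + 1) := by
    intro n
    induction n with
    | zero =>
      simp [hu, Finset.sum_range_succ, mul_div_cancel₀ _ (hbpos 0).ne']
    | succ n ih =>
      rw [Finset.sum_range_succ, ih, Finset.sum_range_succ (fun i => d i * u (i + 1))]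
      have hu2 : u (n + 2) = u (n + 1) + a (n + 1) / b (n + 1) :=
        Finset.sum_range_succ (fun i => a i / b i) (n + 1)
      rw [hu2]
      have : b (n+1) * (a (n+1) / b (n+1)) = a (n+1) :=
        mul_div_cancel₀ _ (hbpos (n+1)).ne'
      simp only [hd]
      nlinarith [this]
  have := (h.comp (tendsto_add_atTop_nat 1)).sub hA
  rw [sub_self] at this
  refine this.congr fun n => ?_
  rw [hAbel n, sub_div]
  congr 1
  · rw [mul_comm, mul_div_assoc, div_self (hbpos n).ne', mul_one]
    rfl

/-- Key elementary inequality: for `1 ≤ a ≤ b` and `0 < δ ≤ 1`,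
`(b - a) / b ^ (1 + δ) ≤ a ^ (-δ) / δ - b ^ (-δ) / δ`. -/
lemma aux_ineq {a b δ : ℝ} (ha : 1 ≤ a) (hab : a ≤ b) (hδ0 : 0 < δ) (hδ1 : δ ≤ 1) :
    (b - a) / b ^ (1 + δ) ≤ a ^ (-δ) / δ - b ^ (-δ) / δ := by
  have ha0 : (0:ℝ) < a := lt_of_lt_of_le one_pos ha
  have hb0 : (0:ℝ) < b := lt_of_lt_of_le ha0 hab
  set t : ℝ := a / b with htdef
  have ht0 : 0 < t := div_pos ha0 hb0
  have ht1 : t ≤ 1 := (div_le_one hb0).2 hab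
  -- Bernoulli : t ^ δ ≤ 1 + δ * (t - 1)
  have hbern : t ^ δ ≤ 1 + δ * (t - 1) := by
    have := rpow_one_add_le_one_add_mul_self (s := t - 1) (by linarith) hδ0.le hδ1
    simpa using this
  have htp : (0:ℝ) < t ^ δ := Real.rpow_pos_of_pos ht0 δ
  -- key : 1 + δ * (1 - t) ≤ t ^ (-δ)
  have hkey : 1 + δ * (1 - t) ≤ t ^ (-δ) := by
    rw [Real.rpow_neg ht0.le]
    rw [le_inv_comm₀ (by nlinarith) htp]
    calc t ^ δ ≤ 1 + δ * (t - 1) := hbern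
      _ ≤ (1 + δ * (1 - t))⁻¹ := by
          rw [inv_eq_one_div, le_div_iff₀ (by nlinarith)]
          nlinarith [sq_nonneg (δ * (1 - t))]
  -- rewrite t ^ (-δ) = b ^ δ / a ^ δ
  have hA : (0:ℝ) < a ^ δ := Real.rpow_pos_of_pos ha0 δ
  have hB : (0:ℝ) < b ^ δ := Real.rpow_pos_of_pos hb0 δ
  have ht2 : t ^ (-δ) = b ^ δ / a ^ δ := by
    rw [htdef, Real.rpow_neg (div_pos ha0 hb0).le, Real.div_rpow ha0.le hb0.le, inv_div]
  have hkey2 : 1 + δ * (1 - a / b) ≤ b ^ δ / a ^ δ := ht2 ▸ hkey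
  have hb1δ : b ^ (1 + δ) = b * b ^ δ := by
    rw [Real.rpow_add hb0, Real.rpow_one]
  have han : a ^ (-δ) = (a ^ δ)⁻¹ := Real.rpow_neg ha0.le δ
  have hbn : b ^ (-δ) = (b ^ δ)⁻¹ := Real.rpow_neg hb0.le δ
  have h3 : (1 + δ * (1 - a / b)) * (a ^ δ * b) ≤ b ^ δ / a ^ δ * (a ^ δ * b) := by
    apply mul_le_mul_of_nonneg_right hkey2 (by positivity)
  have h4 : b ^ δ / a ^ δ * (a ^ δ * b) = b ^ δ * b := by
    field_simp
  have h5 : (1 + δ * (1 - a / b)) * (a ^ δ * b) = a ^ δ * b + δ * (b - a) * a ^ δ := by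
    field_simp
  rw [h4, h5] at h3
  have h6 : δ * (b - a) * a ^ δ ≤ (b ^ δ - a ^ δ) * b := by nlinarith
  rw [hb1δ, han, hbn]
  have e : (a ^ δ)⁻¹ / δ - (b ^ δ)⁻¹ / δ = (b ^ δ - a ^ δ) / (δ * (a ^ δ * b ^ δ)) := by
    field_simp
  rw [e, div_le_div_iff₀ (by positivity) (by positivity)]
  nlinarith [mul_le_mul_of_nonneg_right h6 hB.le]

/-- Summability bound. -/
lemma aux_sum_bound {V : ℕ → ℝ} (hm : Monotone V) (h0 : ∀ n, 0 ≤ V n)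
    (htop : Tendsto V atTop atTop) {δ : ℝ} (hδ0 : 0 < δ) (hδ1 : δ ≤ 1) :
    ∃ C, ∀ n, ∑ k ∈ Finset.range n, (V (k+1) - V k) / (max 1 (V (k+1))) ^ (1+δ) ≤ C := by
  obtain ⟨N, hN⟩ := (htop.eventually_ge_atTop 1).exists_forall_of_atTop
  set w : ℕ → ℝ := fun k => (V (k+1) - V k) / (max 1 (V (k+1))) ^ (1+δ) with hw
  have hwnn : ∀ k, 0 ≤ w k := by
    intro k
    apply div_nonneg (sub_nonneg.2 (hm (Nat.le_succ k)))
    exact Real.rpow_nonneg (le_trans zero_le_one (le_max_left _ _)) _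
  set g : ℕ → ℝ := fun k => (V k) ^ (-δ) / δ with hg
  refine ⟨(∑ k ∈ Finset.range N, w k) + g N, fun n => ?_⟩
  have hgnn : ∀ k, 0 ≤ g k := by
    intro k
    exact div_nonneg (Real.rpow_nonneg (h0 k) _) hδ0.le
  rcases le_or_gt n N with hn | hn
  · calc ∑ k ∈ Finset.range n, w k ≤ ∑ k ∈ Finset.range N, w k :=
          Finset.sum_le_sum_of_subset_of_nonneg (Finset.range_subset_range.2 hn)
            (fun i _ _ => hwnn i)
      _ ≤ _ := le_add_of_nonneg_right (hgnn N)
  · rw [← Finset.sum_range_add_sum_Ico w hn.le]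
    have : ∑ k ∈ Finset.Ico N n, w k ≤ g N := by
      have hstep : ∀ k, N ≤ k → w k ≤ g k - g (k + 1) := by
        intro k hk
        have h1 : 1 ≤ V k := hN k hk
        have h2 : 1 ≤ V (k+1) := le_trans h1 (hm (Nat.le_succ k))
        have hmax : max 1 (V (k+1)) = V (k+1) := max_eq_right h2
        show (V (k+1) - V k) / (max 1 (V (k+1))) ^ (1+δ) ≤ V k ^ (-δ) / δ - V (k+1) ^ (-δ) / δ
        rw [hmax]
        exact aux_ineq h1 (hm (Nat.le_succ k)) hδ0 hδ1
      calc ∑ k ∈ Finset.Ico N n, w k ≤ ∑ k ∈ Finset.Ico N n, (g k - g (k+1)) := by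
            apply Finset.sum_le_sum
            intro k hk
            exact hstep k (Finset.mem_Ico.1 hk).1
        _ = g N - g n := by
            rw [Finset.sum_Ico_eq_sum_range]
            have := Finset.sum_range_sub' (fun i => g (N + i)) (n - N)
            simpa [Nat.add_sub_cancel' hn.le, add_assoc] using this
        _ ≤ g N := by linarith [hgnn n]
    linarith
end Aux

section Aux2
open Finset
variable {Ω : Type*} [MeasurableSpace Ω] {μ : Measure Ω}


lemma aux_iIndepFun_ae_eq {f g : ℕ → Ω → ℝ}
    (hf : iIndepFun f μ) (hfg : ∀ i, f i =ᵐ[μ] g i) :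
    iIndepFun g μ := by
  rw [ProbabilityTheory.iIndepFun_iff_measure_inter_preimage_eq_mul] at hf ⊢
  intro S sets hmeas
  have hall : ∀ᵐ ω ∂μ, ∀ i ∈ S, f i ω = g i ω :=
    (MeasureTheory.ae_ball_iff S.countable_toSet).2 fun i _ => hfg i
  have h1 : ∀ i : ℕ, (f i ⁻¹' sets i : Set Ω) =ᵐ[μ] g i ⁻¹' sets i := by
    intro i
    rw [Filter.eventuallyEq_set]
    filter_upwards [hfg i] with ω hω
    simp only [Set.mem_preimage, hω]
  have h2 : ((⋂ i ∈ S, g i ⁻¹' sets i : Set Ω)) =ᵐ[μ] (⋂ i ∈ S, f i ⁻¹' sets i) := by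
    rw [Filter.eventuallyEq_set]
    filter_upwards [hall] with ω hω
    simp only [Set.mem_iInter, Set.mem_preimage]
    constructor
    · intro h i hi
      rw [hω i hi]
      exact h i hi
    · intro h i hi
      rw [← hω i hi]
      exact h i hi
  rw [measure_congr h2, hf S hmeas]
  exact Finset.prod_congr rfl fun i _ => measure_congr (h1 i)

lemma aux_evariance_congr {X Y : Ω → ℝ} (h : X =ᵐ[μ] Y) :
    evariance X μ = evariance Y μ := by
  unfold evariance
  rw [integral_congr_ae h]
  apply lintegral_congr_ae
  filter_upwards [h] with ω hω
  rw [hω]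

lemma aux_variance_congr {X Y : Ω → ℝ} (h : X =ᵐ[μ] Y) :
    variance X μ = variance Y μ := by
  unfold variance
  rw [aux_evariance_congr h]

lemma aux_variance_sub_const [IsProbabilityMeasure μ] {X : Ω → ℝ} (hX : Integrable X μ) (c : ℝ) :
    variance (fun ω => X ω - c) μ = variance X μ := by
  unfold variance evariance
  congr 1
  have hint : ∫ ω, (X ω - c) ∂μ = (∫ ω, X ω ∂μ) - c := by
    rw [integral_sub hX (integrable_const c), integral_const]
    simp
  apply lintegral_congr
  intro ω
  rw [hint]
  congr 2
  ring



lemma aux_martingale_conv [IsProbabilityMeasure μ] {W : ℕ → Ω → ℝ}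
    (hWsm : ∀ i, StronglyMeasurable (W i))
    (hWind : iIndepFun W μ)
    (hWL2 : ∀ i, MemLp (W i) 2 μ)
    (hWmean : ∀ i, ∫ ω, W i ω ∂μ = 0)
    {C : ℝ} (hC : ∀ n, ∑ i ∈ Finset.range (n + 1), variance (W i) μ ≤ C) :
    ∀ᵐ ω ∂μ, ∃ c, Tendsto (fun n => ∑ i ∈ Finset.range (n + 1), W i ω) atTop (nhds c) := by
  set f : ℕ → Ω → ℝ := fun n ω => ∑ i ∈ Finset.range (n + 1), W i ω with hf
  have hfeq : ∀ n, f n = ∑ i ∈ Finset.range (n + 1), W i := by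
    intro n
    ext ω
    simp [hf]
  set ℱ := Filtration.natural W hWsm with hℱ
  have hfL2 : ∀ n, MemLp (f n) 2 μ := fun n =>
    memLp_finset_sum _ fun i _ => hWL2 i
  have hWint : ∀ i, Integrable (W i) μ := fun i => (hWL2 i).integrable one_le_two
  have hfint : ∀ n, Integrable (f n) μ := fun n => (hfL2 n).integrable one_le_two
  have hadp : StronglyAdapted ℱ f := by
    intro n
    rw [hfeq n]
    apply Finset.stronglyMeasurable_sum
    intro i hi
    exact ((Filtration.stronglyAdapted_natural hWsm) i).mono
      (ℱ.mono (Nat.lt_succ_iff.1 (Finset.mem_range.1 hi)))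
  have hmart : Martingale f ℱ μ := by
    refine ⟨hadp, fun i j hij => ?_⟩
    set g : Ω → ℝ := fun ω => ∑ k ∈ Finset.Ico (i + 1) (j + 1), W k ω with hg
    have hgeq : g = ∑ k ∈ Finset.Ico (i + 1) (j + 1), W k := by
      ext ω; simp [hg]
    have hgint : Integrable g μ := integrable_finset_sum _ fun k _ => hWint k
    have hsplit : f j = f i + g := by
      funext ω
      simp only [hf, hg, Pi.add_apply]
      rw [← Finset.sum_range_add_sum_Ico _ (Nat.succ_le_succ hij)]
    rw [hsplit]
    have h1 : μ[f i + g|ℱ i] =ᵐ[μ] μ[f i|ℱ i] + μ[g|ℱ i] := condExp_add (hfint i) hgint _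
    have h2 : μ[f i|ℱ i] = f i :=
      condExp_of_stronglyMeasurable (ℱ.le i) (hadp i) (hfint i)
    have h3 : μ[g|ℱ i] =ᵐ[μ] 0 := by
      rw [hgeq]
      refine (condExp_finset_sum (fun k _ => hWint k) _).trans ?_
      have h4 : ∀ k ∈ Finset.Ico (i + 1) (j + 1), μ[W k|ℱ i] =ᵐ[μ] fun _ => μ[W k] :=
        fun k hk => hWind.condExp_natural_ae_eq_of_lt hWsm
          (Nat.lt_of_succ_le (Finset.mem_Ico.1 hk).1)
      have h5 : ∀ᵐ ω ∂μ, ∀ k ∈ Finset.Ico (i + 1) (j + 1), (μ[W k|ℱ i]) ω = μ[W k] :=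
        (MeasureTheory.ae_ball_iff (Finset.Ico (i+1) (j+1)).countable_toSet).2 h4
      filter_upwards [h5] with ω hω
      simp only [Finset.sum_apply, Pi.zero_apply]
      rw [Finset.sum_congr rfl fun k hk => hω k hk]
      simp [hWmean]
    refine h1.trans ?_
    rw [h2]
    have := (Filter.EventuallyEq.refl (ae μ) (f i)).add h3
    refine this.trans ?_
    filter_upwards with ω
    simp
  -- mean of f n is zero
  have hfmean : ∀ n, ∫ ω, f n ω ∂μ = 0 := by
    intro n
    simp only [hf]
    rw [integral_finset_sum _ fun i _ => hWint i]
    simp [hWmean]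
  -- variance of f n bounded
  have hfvar : ∀ n, variance (f n) μ ≤ C := by
    intro n
    rw [hfeq n]
    rw [IndepFun.variance_sum (fun i _ => hWL2 i)
      (fun i _ j hj hij => hWind.indepFun hij)]
    exact hC n
  -- L¹ bound
  set R : NNReal := Real.toNNReal C ^ ((1:ℝ)/2) with hR
  have hbdd : ∀ n, eLpNorm (f n) 1 μ ≤ (R : ENNReal) := by
    intro n
    refine le_trans (eLpNorm_le_eLpNorm_of_exponent_le one_le_two
      (hfL2 n).aestronglyMeasurable) ?_
    have hev : evariance (f n) μ = ∫⁻ ω, ‖f n ω‖ₑ ^ 2 ∂μ := by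
      unfold evariance
      rw [hfmean n]
      simp
    have he2 : eLpNorm (f n) 2 μ = (evariance (f n) μ) ^ ((1:ℝ)/2) := by
      rw [eLpNorm_eq_lintegral_rpow_enorm_toReal two_ne_zero ENNReal.ofNat_ne_top, hev]
      have ht : ((2:ENNReal)).toReal = (2:ℝ) := by norm_num
      rw [ht]
      norm_num
    have hle : evariance (f n) μ ≤ ENNReal.ofReal C := by
      rw [← (hfL2 n).ofReal_variance_eq]
      exact ENNReal.ofReal_le_ofReal (hfvar n)
    rw [he2]
    calc (evariance (f n) μ) ^ ((1:ℝ)/2) ≤ (ENNReal.ofReal C) ^ ((1:ℝ)/2) :=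
          ENNReal.rpow_le_rpow hle (by norm_num)
      _ = (R : ENNReal) := by
          rw [hR, ENNReal.ofReal, ENNReal.coe_rpow_of_nonneg _ (by norm_num : (0:ℝ) ≤ 1/2)]
  have := hmart.submartingale.exists_ae_tendsto_of_bdd hbdd
  filter_upwards [this] with ω hω
  exact hω
end Aux2

theorem stmt10 {Ω : Type*} [MeasurableSpace Ω] (μ : Measure Ω) [IsProbabilityMeasure μ]
    (η : ℕ → Ω → ℝ)
    (hind : iIndepFun η μ)
    (hL2 : ∀ i, MemLp (η i) 2 μ)
    (hVar : Tendsto (fun x : ℕ => variance (fun ω => ∑ i ∈ Finset.Icc 1 x, η i ω) μ)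
      atTop atTop)
    (ε : ℝ) (hε : 0 < ε) :
    ∀ᵐ ω ∂μ, Tendsto (fun x : ℕ =>
        ((∑ i ∈ Finset.Icc 1 x, η i ω) - ∫ ω', (∑ i ∈ Finset.Icc 1 x, η i ω') ∂μ) /
          (variance (fun ω' => ∑ i ∈ Finset.Icc 1 x, η i ω') μ) ^ ((1 : ℝ) / 2 + ε))
      atTop (nhds 0) := by
  classical
  set V : ℕ → ℝ := fun x => variance (fun ω => ∑ i ∈ Finset.Icc 1 x, η i ω) μ with hV
  have hηint : ∀ i, Integrable (η i) μ := fun i => (hL2 i).integrable one_le_two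
  -- measurable modifications
  set η' : ℕ → Ω → ℝ := fun i => ((hL2 i).aestronglyMeasurable).mk (η i) with hη'
  have hη'sm : ∀ i, StronglyMeasurable (η' i) := fun i =>
    (hL2 i).aestronglyMeasurable.stronglyMeasurable_mk
  have hηae : ∀ i, η i =ᵐ[μ] η' i := fun i => (hL2 i).aestronglyMeasurable.ae_eq_mk
  have hη'L2 : ∀ i, MemLp (η' i) 2 μ := fun i => (hL2 i).ae_eq (hηae i)
  have hη'int : ∀ i, Integrable (η' i) μ := fun i => (hη'L2 i).integrable one_le_two
  have hind' : iIndepFun η' μ := aux_iIndepFun_ae_eq hind hηae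
  -- variance representation
  have hrep : ∀ x, V x = ∑ i ∈ Finset.Icc 1 x, variance (η i) μ := by
    intro x
    simp only [hV]
    have h1 : (fun ω => ∑ i ∈ Finset.Icc 1 x, η i ω) = ∑ i ∈ Finset.Icc 1 x, η i := by
      ext ω; simp
    rw [h1, IndepFun.variance_sum (fun i _ => hL2 i)
      (fun i _ j _ hij => hind.indepFun hij)]
  have hVmono : Monotone V := by
    intro x y hxy
    rw [hrep, hrep]
    exact Finset.sum_le_sum_of_subset_of_nonneg (Finset.Icc_subset_Icc_right hxy)
      (fun i _ _ => variance_nonneg _ _)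
  have hVnn : ∀ x, 0 ≤ V x := fun x => variance_nonneg _ _
  have hVsucc : ∀ k : ℕ, variance (η (k + 1)) μ = V (k + 1) - V k := by
    intro k
    rw [hrep, hrep, Finset.sum_Icc_succ_top (Nat.succ_le_succ (Nat.zero_le k))]
    ring
  -- parameters
  set ε' : ℝ := min ε (1/4) with hε'
  have hε'0 : 0 < ε' := lt_min hε (by norm_num)
  have hε'ε : ε' ≤ ε := min_le_left _ _
  have hε'14 : ε' ≤ 1/4 := min_le_right _ _
  set ρ : ℝ := 1/2 + ε' with hρ
  have hρ0 : 0 < ρ := by rw [hρ]; linarith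
  set δ : ℝ := 2 * ε' with hδ
  have hδ0 : 0 < δ := by rw [hδ]; linarith
  have hδ1 : δ ≤ 1 := by rw [hδ]; linarith
  set M : ℕ → ℝ := fun x => max 1 (V x) with hM
  set b : ℕ → ℝ := fun n => M n ^ ρ with hb
  have hM1 : ∀ n, 1 ≤ M n := fun n => le_max_left _ _
  have hMnn : ∀ n, 0 ≤ M n := fun n => zero_le_one.trans (hM1 n)
  have hMmono : Monotone M := fun x y h => max_le_max le_rfl (hVmono h)
  have hb1 : ∀ n, 1 ≤ b n := by
    intro n
    rw [hb]
    calc (1:ℝ) = 1 ^ ρ := (Real.one_rpow ρ).symm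
      _ ≤ M n ^ ρ := Real.rpow_le_rpow zero_le_one (hM1 n) hρ0.le
  have hbpos : ∀ n, (0:ℝ) < b n := fun n => lt_of_lt_of_le one_pos (hb1 n)
  have hbmono : Monotone b := fun x y h =>
    Real.rpow_le_rpow (hMnn x) (hMmono h) hρ0.le
  have hMtop : Tendsto M atTop atTop :=
    tendsto_atTop_mono (fun x => le_max_right 1 (V x)) hVar
  have hbtop : Tendsto b atTop atTop := (tendsto_rpow_atTop hρ0).comp hMtop
  -- centering constants
  set m : ℕ → ℝ := fun i => ∫ ω, η i ω ∂μ with hm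
  have hm' : ∀ i, ∫ ω, η' i ω ∂μ = m i := fun i => integral_congr_ae (hηae i).symm
  -- the weighted increments
  set g : ℕ → ℝ → ℝ := fun i x => if i = 0 then 0 else (b i)⁻¹ * (x - m i) with hg
  have hgm : ∀ i, Measurable (g i) := by
    intro i
    by_cases h : i = 0
    · simp only [hg, h, if_true]
      exact measurable_const
    · simp only [hg, h, if_false]
      exact (measurable_id.sub_const _).const_mul _
  set W : ℕ → Ω → ℝ := fun i ω => g i (η' i ω) with hW
  have hWind : iIndepFun W μ := hind'.comp g hgm
  have hWsm : ∀ i, StronglyMeasurable (W i) := fun i =>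
    ((hgm i).comp (hη'sm i).measurable).stronglyMeasurable
  have hW0 : W 0 = fun _ => (0:ℝ) := by funext ω; simp [hW, hg]
  have hWsucc : ∀ k : ℕ, W (k+1) = fun ω => (b (k+1))⁻¹ * (η' (k+1) ω - m (k+1)) := by
    intro k; funext ω; simp [hW, hg]
  have hWL2 : ∀ i, MemLp (W i) 2 μ := by
    intro i
    cases i with
    | zero => rw [hW0]; exact memLp_const 0
    | succ k =>
      rw [hWsucc k]
      exact (((hη'L2 (k+1)).sub (memLp_const (m (k+1))))).const_mul _
  have hWmean : ∀ i, ∫ ω, W i ω ∂μ = 0 := by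
    intro i
    cases i with
    | zero => rw [hW0]; simp
    | succ k =>
      rw [hWsucc k]
      rw [integral_const_mul, integral_sub (hη'int (k+1)) (integrable_const _),
        integral_const, hm' (k+1)]
      simp
  have hWvar : ∀ k : ℕ, variance (W (k+1)) μ = (V (k+1) - V k) / (M (k+1)) ^ (1 + δ) := by
    intro k
    rw [hWsucc k, variance_const_mul, aux_variance_sub_const (hη'int (k+1)) (m (k+1)),
      ← aux_variance_congr (hηae (k+1)), hVsucc k]
    have hb2 : (b (k+1)) ^ 2 = M (k+1) ^ (1 + δ) := by
      rw [hb]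
      rw [← Real.rpow_natCast (M (k+1) ^ ρ) 2, ← Real.rpow_mul (hMnn (k+1))]
      congr 1
      rw [hρ, hδ]
      push_cast
      ring
    rw [inv_pow, hb2]
    rw [div_eq_inv_mul, mul_comm]
  -- sum bound
  obtain ⟨C, hCb⟩ := aux_sum_bound hVmono hVnn hVar hδ0 hδ1
  have hC : ∀ n, ∑ i ∈ Finset.range (n + 1), variance (W i) μ ≤ C := by
    intro n
    rw [Finset.sum_range_succ']
    have h0 : variance (W 0) μ = 0 := by rw [hW0]; exact variance_zero μ
    rw [h0, add_zero]
    calc ∑ i ∈ Finset.range n, variance (W (i+1)) μ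
        = ∑ i ∈ Finset.range n, (V (i+1) - V i) / (max 1 (V (i+1))) ^ (1 + δ) := by
          exact Finset.sum_congr rfl fun i _ => hWvar i
      _ ≤ C := hCb n
  -- martingale convergence
  have hconv := aux_martingale_conv hWsm hWind hWL2 hWmean hC
  have hae : ∀ᵐ ω ∂μ, ∀ i, η i ω = η' i ω := ae_all_iff.2 fun i => hηae i
  -- integral of partial sums
  have hintS : ∀ x : ℕ, ∫ ω', (∑ i ∈ Finset.Icc 1 x, η i ω') ∂μ
      = ∑ i ∈ Finset.Icc 1 x, m i := by
    intro x
    rw [integral_finset_sum _ fun i _ => hηint i]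
  filter_upwards [hconv, hae] with ω hω hωae
  obtain ⟨c, hc⟩ := hω
  -- Kronecker setup
  set a : ℕ → ℝ := fun i => if i = 0 then 0 else η i ω - m i with ha
  have hdiv : ∀ i, a i / b i = W i ω := by
    intro i
    cases i with
    | zero => simp [ha, hW, hg]
    | succ k =>
      rw [hWsucc k]
      simp only [ha, Nat.succ_ne_zero, if_false]
      rw [hωae (k+1), div_eq_inv_mul]
  have hc' : Tendsto (fun n => ∑ i ∈ Finset.range n, a i / b i) atTop (nhds c) := by
    refine (tendsto_add_atTop_iff_nat 1).1 ?_
    refine hc.congr fun n => ?_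
    exact (Finset.sum_congr rfl fun i _ => (hdiv i).symm)
  have hkr := aux_kronecker hbmono hb1 hbtop hc'
  -- numerator identification
  have hnum : ∀ n : ℕ, ∑ i ∈ Finset.range (n + 1), a i
      = (∑ i ∈ Finset.Icc 1 n, η i ω) - ∑ i ∈ Finset.Icc 1 n, m i := by
    intro n
    rw [Finset.sum_range_succ']
    have ha0 : a 0 = 0 := by simp [ha]
    rw [ha0, add_zero, ← Finset.sum_sub_distrib]
    have : Finset.Icc 1 n = Finset.Ico 1 (n+1) := by
      rw [Finset.Ico_add_one_right_eq_Icc]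
    rw [this, Finset.sum_Ico_eq_sum_range]
    simp only [Nat.add_sub_cancel]
    refine Finset.sum_congr rfl fun i _ => ?_
    simp [ha, Nat.add_comm 1 i]
  -- final squeeze
  apply squeeze_zero_norm'
    (a := fun n => ‖((∑ i ∈ Finset.Icc 1 n, η i ω) - ∑ i ∈ Finset.Icc 1 n, m i) / b n‖)
  · filter_upwards [hVar.eventually_ge_atTop 1] with x hx
    have hVx : (1:ℝ) ≤ V x := hx
    have hVxpos : (0:ℝ) < V x := lt_of_lt_of_le one_pos hVx
    have hbx : b x = V x ^ ρ := by rw [hb, hM]; simp only [max_eq_right hVx]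
    have h1 : V x ^ ρ ≤ V x ^ ((1:ℝ)/2 + ε) := by
      apply Real.rpow_le_rpow_of_exponent_le hVx
      rw [hρ]; linarith
    have h2 : (0:ℝ) < V x ^ ρ := Real.rpow_pos_of_pos hVxpos _
    have h3 : (0:ℝ) < V x ^ ((1:ℝ)/2 + ε) := Real.rpow_pos_of_pos hVxpos _
    rw [hintS x, norm_div, norm_div]
    rw [Real.norm_of_nonneg h3.le, Real.norm_of_nonneg (hbpos x).le, hbx]
    exact div_le_div_of_nonneg_left (norm_nonneg _) h2 h1
  · have h4 : Tendsto (fun n => ((∑ i ∈ Finset.Icc 1 n, η i ω)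
        - ∑ i ∈ Finset.Icc 1 n, m i) / b n) atTop (nhds 0) := by
      refine hkr.congr fun n => ?_
      rw [hnum n]
    have := h4.norm
    simpa using this
end

section
/- As x → ∞, T(x) := Σ_{i=0}^{x-1} γ_i Σ_{j=0}^{i} π_j satisfies T(x) ~ x² ln x · ln ln x, in the case of weights w_0 = w_1 = 1 and w_x = x^{-1}(ln x)^{-1} for x ≥ 2. More precisely, lim_{x→∞} T(x)/(x² ln x ln ln x) = 1. -/
open Filter Asymptotics Finset

lemma tlogn : Tendsto (fun n:ℕ => Real.log n) atTop atTop :=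
  Real.tendsto_log_atTop.comp tendsto_natCast_atTop_atTop

lemma tloglogn : Tendsto (fun n:ℕ => Real.log (Real.log n)) atTop atTop :=
  Real.tendsto_log_atTop.comp tlogn

lemma div_tendsto_one {u v : ℕ → ℝ} {c : ℝ} (h : Tendsto (fun n => u n - v n) atTop (nhds c))
    (hv : Tendsto v atTop atTop) : Tendsto (fun n => u n / v n) atTop (nhds 1) := by
  have h2 : Tendsto (fun n => (u n - v n) / v n + 1) atTop (nhds 1) := by
    have := h.div_atTop hv
    simpa using this.add tendsto_const_nhds
  apply h2.congr'
  filter_upwards [hv.eventually_gt_atTop 0] with n hn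
  field_simp
  ring

lemma succ_div : Tendsto (fun n:ℕ => ((n:ℝ)+1) / n) atTop (nhds 1) := by
  apply div_tendsto_one (c := 1) _ tendsto_natCast_atTop_atTop
  simp

lemma log_succ_div : Tendsto (fun n:ℕ => Real.log ((n:ℝ)+1) / Real.log n) atTop (nhds 1) := by
  refine div_tendsto_one (c := 0) ?_ tlogn
  have h1 : Tendsto (fun n:ℕ => Real.log (((n:ℝ)+1)/n)) atTop (nhds 0) := by
    have : Tendsto (fun n:ℕ => ((n:ℝ)+1)/n) atTop (nhds 1) := succ_div
    have hc : ContinuousAt Real.log 1 := Real.continuousAt_log one_ne_zero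
    simpa [Real.log_one, Function.comp_def] using (hc.tendsto.comp this)
  apply h1.congr'
  filter_upwards [eventually_gt_atTop 0] with n hn
  have hn' : (0:ℝ) < n := by exact_mod_cast hn
  rw [Real.log_div (by linarith) (ne_of_gt hn')]

lemma loglog_succ_div :
    Tendsto (fun n:ℕ => Real.log (Real.log ((n:ℝ)+1)) / Real.log (Real.log n)) atTop (nhds 1) := by
  refine div_tendsto_one (c := 0) ?_ tloglogn
  have h1 : Tendsto (fun n:ℕ => Real.log (Real.log ((n:ℝ)+1) / Real.log n)) atTop (nhds 0) := by
    have hc : ContinuousAt Real.log 1 := Real.continuousAt_log one_ne_zero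
    simpa [Real.log_one, Function.comp_def] using (hc.tendsto.comp log_succ_div)
  apply h1.congr'
  filter_upwards [tlogn.eventually_gt_atTop 1, (tlogn.comp (tendsto_add_atTop_nat 1)).eventually_gt_atTop 0]
    with n hn hn1
  have : (0:ℝ) < Real.log ((n:ℝ)+1) := by
    simpa [Function.comp] using hn1
  rw [Real.log_div (ne_of_gt this) (by linarith)]

lemma inv_ratio {u v : ℕ → ℝ} (h : Tendsto (fun n => u n / v n) atTop (nhds 1)) :
    Tendsto (fun n => v n / u n) atTop (nhds 1) := by
  have := h.inv₀ one_ne_zero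
  simp only [inv_one] at this
  exact this.congr (fun n => by rw [inv_div])

lemma shift_ratio {f : ℕ → ℝ} (h : Tendsto (fun n => f (n+1) / f n) atTop (nhds 1)) :
    Tendsto (fun n => f n / f (n-1)) atTop (nhds 1) := by
  have := h.comp (tendsto_sub_atTop_nat 1)
  apply this.congr'
  filter_upwards [eventually_ge_atTop 1] with n hn
  simp [Function.comp, Nat.sub_add_cancel hn]

noncomputable def gg (n : ℕ) : ℝ := (n:ℝ) * Real.log n

lemma gg_succ_div : Tendsto (fun n => gg (n+1) / gg n) atTop (nhds 1) := by
  have h := succ_div.mul log_succ_div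
  rw [mul_one] at h
  apply h.congr
  intro n
  simp only [gg, div_mul_div_comm]
  push_cast
  ring_nf

lemma hasDeriv_loglog {x : ℝ} (hx : 2 ≤ x) :
    HasDerivAt (fun t => Real.log (Real.log t)) ((x * Real.log x)⁻¹) x := by
  have hx0 : x ≠ 0 := by linarith
  have hlx : Real.log x ≠ 0 := ne_of_gt (Real.log_pos (by linarith))
  have h1 : HasDerivAt Real.log x⁻¹ x := Real.hasDerivAt_log hx0
  have h2 : HasDerivAt Real.log (Real.log x)⁻¹ (Real.log x) := Real.hasDerivAt_log hlx
  have := h2.comp x h1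
  simpa [mul_inv, mul_comm, Function.comp_def] using this

lemma hasDeriv_f {x : ℝ} (hx : 3 ≤ x) :
    HasDerivAt (fun t => t^2 * Real.log t * Real.log (Real.log t))
      (2*x*Real.log x*Real.log (Real.log x) + x*Real.log (Real.log x) + x) x := by
  have hx0 : x ≠ 0 := by linarith
  have hlx : Real.log x ≠ 0 := ne_of_gt (Real.log_pos (by linarith))
  have h1 : HasDerivAt (fun t:ℝ => t^2) (2*x) x := by simpa using hasDerivAt_pow 2 x
  have h2 : HasDerivAt Real.log x⁻¹ x := Real.hasDerivAt_log hx0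
  have h3 := hasDeriv_loglog (by linarith : (2:ℝ) ≤ x)
  have h := (h1.mul h2).mul h3
  refine h.congr_deriv ?_
  simp only [Pi.mul_apply]
  field_simp

lemma sum_equiv {a d : ℕ → ℝ} (h : a ~[atTop] d)
    (hd0 : ∀ᶠ i in atTop, 0 ≤ d i)
    (hdiv : Tendsto (fun n => ∑ i ∈ range n, d i) atTop atTop) :
    (fun n => ∑ i ∈ range n, a i) ~[atTop] (fun n => ∑ i ∈ range n, d i) := by
  obtain ⟨N, hN⟩ := eventually_atTop.1 hd0
  set g : ℕ → ℝ := fun i => if N ≤ i then d i else 0 with hgdef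
  have hgeq : ∀ i, N ≤ i → g i = d i := fun i hi => if_pos hi
  have hg0 : ∀ i, 0 ≤ g i := by
    intro i
    by_cases hi : N ≤ i
    · rw [hgeq i hi]; exact hN i hi
    · simp [hgdef, hi]
  have hsum : ∀ n, N ≤ n →
      ∑ i ∈ range n, g i = (∑ i ∈ range n, d i) - ∑ i ∈ range N, d i := by
    intro n hn
    rw [← sum_range_add_sum_Ico d hn, ← sum_range_add_sum_Ico g hn]
    have h1 : ∑ i ∈ range N, g i = 0 := by
      apply sum_eq_zero
      intro i hi
      have := mem_range.1 hi
      simp [hgdef, Nat.not_le.2 this]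
    have h2 : ∑ i ∈ Ico N n, g i = ∑ i ∈ Ico N n, d i :=
      sum_congr rfl (fun i hi => hgeq i (mem_Ico.1 hi).1)
    rw [h1, h2]; ring
  have hsum' : (fun n => ∑ i ∈ range n, g i)
      =ᶠ[atTop] (fun n => (∑ i ∈ range n, d i) - ∑ i ∈ range N, d i) := by
    filter_upwards [eventually_ge_atTop N] with n hn using hsum n hn
  have hgdiv : Tendsto (fun n => ∑ i ∈ range n, g i) atTop atTop := by
    rw [tendsto_congr' hsum']
    exact hdiv.atTop_add tendsto_const_nhds
  have hdg : d =ᶠ[atTop] g := by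
    filter_upwards [eventually_ge_atTop N] with i hi using (hgeq i hi).symm
  have had : (fun i => a i - d i) =o[atTop] g :=
    h.isLittleO.trans_isBigO hdg.isBigO
  have hsums := had.sum_range hg0 hgdiv
  have hOg : (fun n => ∑ i ∈ range n, g i) =O[atTop] (fun n => ∑ i ∈ range n, d i) := by
    apply hsum'.isBigO.trans
    have hc : (fun _ : ℕ => ∑ i ∈ range N, d i) =o[atTop] (fun n => ∑ i ∈ range n, d i) :=
      isLittleO_const_left.2 (Or.inr (by simpa using hdiv.comp (tendsto_id (α := ℕ)) |>.congr (fun n => rfl) |> fun t => (tendsto_norm_atTop_atTop.comp hdiv)))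
    exact (isBigO_refl _ _).sub hc.isBigO
  have final : (fun n => (∑ i ∈ range n, a i) - ∑ i ∈ range n, d i)
      =o[atTop] (fun n => ∑ i ∈ range n, d i) := by
    have h2 := hsums.trans_isBigO hOg
    apply h2.congr_left
    intro n
    rw [sum_sub_distrib]
  exact final

noncomputable def llF (n : ℕ) : ℝ := 2 * Real.log (Real.log n)
noncomputable def eF (n : ℕ) : ℝ := llF (n+1) - llF n
noncomputable def fRn (n : ℕ) : ℝ := (n:ℝ)^2 * Real.log n * Real.log (Real.log n)
noncomputable def dF (n : ℕ) : ℝ := fRn (n+1) - fRn n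
noncomputable def phi (x : ℝ) : ℝ :=
  2*x*Real.log x*Real.log (Real.log x) + x*Real.log (Real.log x) + x



lemma mvt_loglog {n : ℕ} (hn : 3 ≤ n) :
    ∃ c : ℝ, (n:ℝ) ≤ c ∧ c ≤ (n:ℝ)+1 ∧
      Real.log (Real.log ((n:ℝ)+1)) - Real.log (Real.log n) = (c * Real.log c)⁻¹ := by
  have h3 : (3:ℝ) ≤ (n:ℝ) := by exact_mod_cast hn
  have hab : (n:ℝ) < (n:ℝ)+1 := by linarith
  obtain ⟨c, hc, hceq⟩ := exists_hasDerivAt_eq_slope (fun t => Real.log (Real.log t))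
    (fun t => (t * Real.log t)⁻¹) hab
    (fun x hx => (hasDeriv_loglog (by have := hx.1; linarith)).continuousAt.continuousWithinAt)
    (fun x hx => hasDeriv_loglog (by have := hx.1; linarith))
  refine ⟨c, hc.1.le, hc.2.le, ?_⟩
  rw [hceq]
  simp

lemma mvt_f {n : ℕ} (hn : 3 ≤ n) :
    ∃ c : ℝ, (n:ℝ) ≤ c ∧ c ≤ (n:ℝ)+1 ∧ dF n = phi c := by
  have h3 : (3:ℝ) ≤ (n:ℝ) := by exact_mod_cast hn
  have hab : (n:ℝ) < (n:ℝ)+1 := by linarith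
  obtain ⟨c, hc, hceq⟩ := exists_hasDerivAt_eq_slope
    (fun t => t^2 * Real.log t * Real.log (Real.log t)) phi hab
    (fun x hx => (hasDeriv_f (by have := hx.1; linarith)).continuousAt.continuousWithinAt)
    (fun x hx => hasDeriv_f (by have := hx.1; linarith))
  refine ⟨c, hc.1.le, hc.2.le, ?_⟩
  rw [hceq]
  unfold dF fRn
  push_cast
  simp

lemma base3 {x : ℝ} (h3 : (3:ℝ) ≤ x) : 1 < Real.log x ∧ 0 < Real.log (Real.log x) := by
  have he : Real.exp 1 < x := by
    have := Real.exp_one_lt_d9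
    linarith
  have hl : 1 < Real.log x := by
    have := Real.log_lt_log (Real.exp_pos 1) he
    rwa [Real.log_exp] at this
  exact ⟨hl, Real.log_pos hl⟩

lemma mono_gl {x y : ℝ} (h3 : (3:ℝ) ≤ x) (hxy : x ≤ y) :
    x * Real.log x ≤ y * Real.log y ∧ 0 < x * Real.log x := by
  have hx := base3 h3
  have hlog := Real.log_le_log (by linarith) hxy
  constructor
  · apply mul_le_mul hxy hlog (by linarith) (by linarith)
  · apply mul_pos (by linarith) (by linarith)

lemma mono_phi {x y : ℝ} (h3 : (3:ℝ) ≤ x) (hxy : x ≤ y) : phi x ≤ phi y := by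
  have hx := base3 h3
  have hy := base3 (by linarith : (3:ℝ) ≤ y)
  have hlog := Real.log_le_log (by linarith) hxy
  have hll := Real.log_le_log (by linarith) hlog
  unfold phi
  have h1 : 2*x*Real.log x*Real.log (Real.log x) ≤ 2*y*Real.log y*Real.log (Real.log y) := by
    apply mul_le_mul _ hll (by linarith) (by nlinarith)
    apply mul_le_mul (by linarith) hlog (by linarith) (by linarith)
  have h2 : x*Real.log (Real.log x) ≤ y*Real.log (Real.log y) :=
    mul_le_mul hxy hll (by linarith) (by linarith)
  linarith

lemma phi_pos {x : ℝ} (h3 : (3:ℝ) ≤ x) : 0 < phi x := by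
  have hx := base3 h3
  unfold phi
  nlinarith [mul_pos (mul_pos (by linarith : (0:ℝ) < 2*x) (by linarith : (0:ℝ) < Real.log x)) hx.2,
    mul_pos (by linarith : (0:ℝ) < x) hx.2]

lemma dF_bounds {n : ℕ} (hn : 3 ≤ n) :
    phi (n:ℝ) ≤ dF n ∧ dF n ≤ phi ((n:ℝ)+1) := by
  have h3 : (3:ℝ) ≤ (n:ℝ) := by exact_mod_cast hn
  obtain ⟨c, hc1, hc2, hceq⟩ := mvt_f hn
  rw [hceq]
  exact ⟨mono_phi h3 hc1, mono_phi (by linarith) hc2⟩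

lemma eF_bounds {n : ℕ} (hn : 3 ≤ n) :
    2 * (((n:ℝ)+1) * Real.log ((n:ℝ)+1))⁻¹ ≤ eF n ∧ eF n ≤ 2 * ((n:ℝ) * Real.log n)⁻¹ := by
  have h3 : (3:ℝ) ≤ (n:ℝ) := by exact_mod_cast hn
  obtain ⟨c, hc1, hc2, hceq⟩ := mvt_loglog hn
  have heq : eF n = 2 * (c * Real.log c)⁻¹ := by
    unfold eF llF
    push_cast
    rw [← mul_sub, hceq]
  rw [heq]
  have m1 := mono_gl h3 hc1
  have m2 := mono_gl (by linarith : (3:ℝ) ≤ c) hc2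
  constructor
  · have : (((n:ℝ)+1) * Real.log ((n:ℝ)+1))⁻¹ ≤ (c * Real.log c)⁻¹ := by
      apply inv_anti₀ m2.2 m2.1
    linarith
  · have : (c * Real.log c)⁻¹ ≤ ((n:ℝ) * Real.log n)⁻¹ := by
      apply inv_anti₀ m1.2 m1.1
    linarith

lemma eF_pos {n : ℕ} (hn : 3 ≤ n) : 0 < eF n := by
  have h3 : (3:ℝ) ≤ (n:ℝ) := by exact_mod_cast hn
  have := (eF_bounds hn).1
  have hp : (0:ℝ) < ((n:ℝ)+1) * Real.log ((n:ℝ)+1) := (mono_gl (by linarith) le_rfl).2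
  have : 0 < 2 * (((n:ℝ)+1) * Real.log ((n:ℝ)+1))⁻¹ := by positivity
  linarith [(eF_bounds hn).1]

noncomputable def pF (n : ℕ) : ℝ := (gg (n-1))⁻¹ + (gg n)⁻¹
noncomputable def GF (n : ℕ) : ℝ := gg n * llF n
noncomputable def psi (n : ℕ) : ℝ := phi (n:ℝ)

lemma gg_pos {n : ℕ} (hn : 2 ≤ n) : 0 < gg n := by
  have h2 : (2:ℝ) ≤ (n:ℝ) := by exact_mod_cast hn
  exact mul_pos (by linarith) (Real.log_pos (by linarith))

lemma gg_cast {n : ℕ} (hn : 1 ≤ n) : gg n = (n:ℝ) * Real.log n := rfl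

lemma gshift : Tendsto (fun n => gg n / gg (n-1)) atTop (nhds 1) := shift_ratio gg_succ_div

lemma llF_succ_div : Tendsto (fun n => llF (n+1) / llF n) atTop (nhds 1) := by
  apply loglog_succ_div.congr
  intro n
  unfold llF
  push_cast
  rw [mul_div_mul_left _ _ (two_ne_zero)]

lemma GF_succ_div : Tendsto (fun n => GF (n+1) / GF n) atTop (nhds 1) := by
  have h := gg_succ_div.mul llF_succ_div
  rw [mul_one] at h
  apply h.congr
  intro n
  rw [div_mul_div_comm]
  rfl

lemma pF_equiv : pF ~[atTop] eF := by
  have hlo : Tendsto (fun n => (gg n / gg (n-1) + 1)/2) atTop (nhds 1) := by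
    have := (gshift.add (tendsto_const_nhds : Tendsto (fun _:ℕ => (1:ℝ)) atTop (nhds 1))).div_const 2
    norm_num at this
    exact this
  have hhi : Tendsto (fun n => (gg (n+1) / gg (n-1) + gg (n+1) / gg n)/2) atTop (nhds 1) := by
    have h1 : Tendsto (fun n => gg (n+1) / gg (n-1)) atTop (nhds 1) := by
      have := gg_succ_div.mul gshift
      rw [mul_one] at this
      apply this.congr'
      filter_upwards [eventually_ge_atTop 2] with n hn
      have hne : gg n ≠ 0 := ne_of_gt (gg_pos hn)
      rw [div_mul_div_comm, mul_comm (gg (n+1)) (gg n), mul_div_mul_left _ _ hne]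
    have := (h1.add gg_succ_div).div_const 2
    norm_num at this
    exact this
  have hsq : Tendsto (fun n => pF n / eF n) atTop (nhds 1) := by
    apply tendsto_of_tendsto_of_tendsto_of_le_of_le' hlo hhi
    · filter_upwards [eventually_ge_atTop 3] with n hn
      have h3 : (3:ℝ) ≤ (n:ℝ) := by exact_mod_cast hn
      have hb := eF_bounds hn
      have hep := eF_pos hn
      have hg1 : 0 < gg (n-1) := gg_pos (by omega)
      have hg2 : 0 < gg n := gg_pos (by omega)
      have hpf : 0 ≤ pF n := by
        unfold pF; positivity
      have step : pF n / (2 * (gg n)⁻¹) ≤ pF n / eF n := by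
        apply div_le_div_of_nonneg_left hpf hep
        have : gg n = (n:ℝ) * Real.log n := rfl
        rw [this]
        exact hb.2
      calc (gg n / gg (n-1) + 1)/2 = pF n / (2 * (gg n)⁻¹) := by
            unfold pF; field_simp
        _ ≤ pF n / eF n := step
    · filter_upwards [eventually_ge_atTop 3] with n hn
      have h3 : (3:ℝ) ≤ (n:ℝ) := by exact_mod_cast hn
      have hb := eF_bounds hn
      have hep := eF_pos hn
      have hg1 : 0 < gg (n-1) := gg_pos (by omega)
      have hg2 : 0 < gg n := gg_pos (by omega)
      have hg3 : 0 < gg (n+1) := gg_pos (by omega)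
      have hpf : 0 ≤ pF n := by unfold pF; positivity
      have hlow : 2 * (gg (n+1))⁻¹ ≤ eF n := by
        have : gg (n+1) = ((n:ℝ)+1) * Real.log ((n:ℝ)+1) := by
          unfold gg; push_cast; ring_nf
        rw [this]
        exact hb.1
      have step : pF n / eF n ≤ pF n / (2 * (gg (n+1))⁻¹) := by
        apply div_le_div_of_nonneg_left hpf (by positivity) hlow
      calc pF n / eF n ≤ pF n / (2 * (gg (n+1))⁻¹) := step
        _ = (gg (n+1) / gg (n-1) + gg (n+1) / gg n)/2 := by
            unfold pF; field_simp
  apply isEquivalent_of_tendsto_one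
  · exact hsq.congr (fun n => by simp [Pi.div_apply])

lemma GF_pos {n : ℕ} (hn : 3 ≤ n) : 0 < GF n := by
  have h3 : (3:ℝ) ≤ (n:ℝ) := by exact_mod_cast hn
  have := base3 h3
  exact mul_pos (gg_pos (by omega)) (by unfold llF; linarith)

lemma psi_div_GF : Tendsto (fun n => psi n / GF n) atTop (nhds 1) := by
  have h1 : Tendsto (fun n:ℕ => (2 * Real.log n)⁻¹) atTop (nhds 0) :=
    (tlogn.const_mul_atTop two_pos).inv_tendsto_atTop
  have h2 : Tendsto (fun n:ℕ => (2 * (Real.log n * Real.log (Real.log n)))⁻¹) atTop (nhds 0) :=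
    ((tlogn.atTop_mul_atTop₀ tloglogn).const_mul_atTop two_pos).inv_tendsto_atTop
  have h := (tendsto_const_nhds (x := (1:ℝ)) (f := atTop (α := ℕ))).add (h1.add h2)
  norm_num at h
  apply h.congr'
  filter_upwards [eventually_ge_atTop 3] with n hn
  have h3 : (3:ℝ) ≤ (n:ℝ) := by exact_mod_cast hn
  have hb := base3 h3
  have hn0 : (n:ℝ) ≠ 0 := by linarith
  have hl0 : Real.log n ≠ 0 := by linarith
  have hll0 : Real.log (Real.log n) ≠ 0 := ne_of_gt hb.2
  unfold psi phi GF gg llF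
  field_simp
  ring

lemma psi_succ_div_GF : Tendsto (fun n => psi (n+1) / GF n) atTop (nhds 1) := by
  have hA : Tendsto (fun n => psi (n+1) / GF (n+1)) atTop (nhds 1) :=
    psi_div_GF.comp (tendsto_add_atTop_nat 1)
  have h := hA.mul GF_succ_div
  rw [mul_one] at h
  apply h.congr'
  filter_upwards [eventually_ge_atTop 3] with n hn
  have hne : GF (n+1) ≠ 0 := ne_of_gt (GF_pos (by omega))
  rw [div_mul_div_comm, mul_comm (psi (n+1)) (GF (n+1)), mul_div_mul_left _ _ hne]

lemma dF_equiv : dF ~[atTop] GF := by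
  have hsq : Tendsto (fun n => dF n / GF n) atTop (nhds 1) := by
    apply tendsto_of_tendsto_of_tendsto_of_le_of_le' psi_div_GF psi_succ_div_GF
    · filter_upwards [eventually_ge_atTop 3] with n hn
      exact (div_le_div_iff_of_pos_right (GF_pos hn)).2 (by exact_mod_cast (dF_bounds hn).1)
    · filter_upwards [eventually_ge_atTop 3] with n hn
      have h2 := (dF_bounds hn).2
      have : dF n ≤ psi (n+1) := by
        unfold psi
        push_cast
        exact h2
      exact (div_le_div_iff_of_pos_right (GF_pos hn)).2 this
  apply isEquivalent_of_tendsto_one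
  · exact hsq.congr (fun n => by simp [Pi.div_apply])

lemma llF_zero : llF 0 = 0 := by simp [llF]

lemma fRn_zero : fRn 0 = 0 := by simp [fRn]

lemma sum_eF (n : ℕ) : ∑ i ∈ range n, eF i = llF n := by
  have := Finset.sum_range_sub llF n
  unfold eF
  rw [this, llF_zero, sub_zero]

lemma sum_dF (n : ℕ) : ∑ i ∈ range n, dF i = fRn n := by
  have := Finset.sum_range_sub fRn n
  unfold dF
  rw [this, fRn_zero, sub_zero]

lemma llF_atTop : Tendsto llF atTop atTop := tloglogn.const_mul_atTop two_pos

lemma fRn_atTop : Tendsto fRn atTop atTop := by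
  have h1 : Tendsto (fun n:ℕ => (n:ℝ)^2) atTop atTop :=
    (tendsto_pow_atTop (two_ne_zero)).comp tendsto_natCast_atTop_atTop
  exact (h1.atTop_mul_atTop₀ tlogn).atTop_mul_atTop₀ tloglogn

lemma llF_succ_equiv : (fun n => llF (n+1)) ~[atTop] llF := by
  apply isEquivalent_of_tendsto_one
  · exact llF_succ_div.congr (fun n => by simp [Pi.div_apply])

theorem stmt16 (w γ π T : ℕ → ℝ)
    (hw0 : w 0 = 1) (hw1 : w 1 = 1)
    (hw : ∀ x, 2 ≤ x → w x = (x : ℝ)⁻¹ * (Real.log x)⁻¹)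
    (hγ0 : γ 0 = 1)
    (hγ : ∀ x, 1 ≤ x → γ x = ∏ i ∈ Finset.Icc 1 x, w (i - 1) / w i)
    (hπ0 : π 0 = w 0)
    (hπ : ∀ x, 1 ≤ x → π x = w (x - 1) + w x)
    (hT : ∀ x, T x = ∑ i ∈ Finset.range x, γ i * ∑ j ∈ Finset.range (i + 1), π j) :
    Filter.Tendsto (fun x : ℕ =>
        T x / ((x : ℝ) ^ 2 * Real.log x * Real.log (Real.log x)))
      Filter.atTop (nhds 1) := by
  -- positivity of weights
  have hwpos : ∀ i, 0 < w i := by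
    intro i
    match i, hw0, hw1 with
    | 0, hw0, _ => rw [hw0]; norm_num
    | 1, _, hw1 => rw [hw1]; norm_num
    | (n+2), _, _ =>
      rw [hw (n+2) (by omega)]
      have h2 : (2:ℝ) ≤ ((n+2:ℕ):ℝ) := by exact_mod_cast (by omega : 2 ≤ n+2)
      have := Real.log_pos (by linarith : (1:ℝ) < ((n+2:ℕ):ℝ))
      positivity
  have hwne : ∀ i, w i ≠ 0 := fun i => ne_of_gt (hwpos i)
  -- telescoping product
  have key : ∀ x, 1 ≤ x → ∏ i ∈ Finset.Icc 1 x, w (i-1) / w i = w 0 / w x := by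
    intro x hx
    induction x with
    | zero => omega
    | succ n ih =>
      rcases Nat.lt_or_ge n 1 with h | h
      · interval_cases n
        simp
      · rw [Finset.prod_Icc_succ_top (by omega), ih h]
        have : n + 1 - 1 = n := by omega
        rw [this]
        field_simp
        rw [div_mul_eq_div_div, div_self (hwne n)]
  -- γ equals gg eventually
  have hγgg : ∀ n, 2 ≤ n → γ n = gg n := by
    intro n hn
    rw [hγ n (by omega), key n (by omega), hw0, hw n hn]
    have h2 : (2:ℝ) ≤ (n:ℝ) := by exact_mod_cast hn
    have hl := Real.log_pos (by linarith : (1:ℝ) < (n:ℝ))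
    unfold gg
    field_simp
  -- π equals pF eventually
  have hπpF : π =ᶠ[atTop] pF := by
    filter_upwards [eventually_ge_atTop 3] with n hn
    rw [hπ n (by omega), hw (n-1) (by omega), hw n (by omega)]
    unfold pF gg
    rw [mul_inv, mul_inv]
  -- the sum P of π is equivalent to llF
  have hπeF : π ~[atTop] eF := hπpF.trans_isEquivalent pF_equiv
  have hPsum : (fun n => ∑ j ∈ range n, π j) ~[atTop] (fun n => ∑ i ∈ range n, eF i) := by
    apply sum_equiv hπeF
    · filter_upwards [eventually_ge_atTop 3] with n hn
      exact (eF_pos hn).le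
    · apply Tendsto.congr (fun n => (sum_eF n).symm) llF_atTop
  have hP : (fun n => ∑ j ∈ range n, π j) ~[atTop] llF := by
    apply hPsum.trans_eventuallyEq
    exact Filter.Eventually.of_forall sum_eF
  -- shifted
  have hPs : (fun n => ∑ j ∈ range (n+1), π j) ~[atTop] (fun n => llF (n+1)) := by
    have := hP.isLittleO.comp_tendsto (tendsto_add_atTop_nat 1)
    exact this
  have hPllF : (fun n => ∑ j ∈ range (n+1), π j) ~[atTop] llF := hPs.trans llF_succ_equiv
  -- the summand a
  have haGF : (fun n => γ n * ∑ j ∈ range (n+1), π j) ~[atTop] GF := by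
    have h1 : (fun n => gg n * ∑ j ∈ range (n+1), π j) ~[atTop] GF :=
      (IsEquivalent.refl (u := gg)).mul hPllF
    apply Filter.EventuallyEq.trans_isEquivalent _ h1
    filter_upwards [eventually_ge_atTop 2] with n hn
    rw [hγgg n hn]
  have haD : (fun n => γ n * ∑ j ∈ range (n+1), π j) ~[atTop] dF := haGF.trans dF_equiv.symm
  -- sum it
  have hTsum : (fun n => ∑ i ∈ range n, γ i * ∑ j ∈ range (i+1), π j) ~[atTop]
      (fun n => ∑ i ∈ range n, dF i) := by
    apply sum_equiv haD
    · filter_upwards [eventually_ge_atTop 3] with n hn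
      have h3 : (3:ℝ) ≤ (n:ℝ) := by exact_mod_cast hn
      have := (dF_bounds hn).1
      have hp := phi_pos h3
      linarith
    · apply Tendsto.congr (fun n => (sum_dF n).symm) fRn_atTop
  have hTf : T ~[atTop] fRn := by
    have h2 : (fun n => ∑ i ∈ range n, γ i * ∑ j ∈ range (i+1), π j) ~[atTop] fRn := by
      apply hTsum.trans_eventuallyEq
      exact Filter.Eventually.of_forall sum_dF
    apply Filter.EventuallyEq.trans_isEquivalent _ h2
    exact Filter.Eventually.of_forall (fun n => hT n)
  have hfne : ∀ᶠ n in atTop, fRn n ≠ 0 := by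
    filter_upwards [eventually_ge_atTop 3] with n hn
    have h3 : (3:ℝ) ≤ (n:ℝ) := by exact_mod_cast hn
    have hb := base3 h3
    unfold fRn
    have h0 : (0:ℝ) < (n:ℝ) := by linarith
    have h1 : (0:ℝ) < Real.log n := by linarith
    exact ne_of_gt (mul_pos (mul_pos (pow_pos h0 2) h1) hb.2)
  have := (isEquivalent_iff_tendsto_one hfne).1 hTf
  apply this.congr
  intro n
  simp [Pi.div_apply, fRn]
end

section
/- For weights w_x = x^{-1}(ln x)^{β} with β > -1 (and w_0 = w_1 = 1), T(x) := Σ_{i=0}^{x-1} γ_i Σ_{j=0}^{i} π_j satisfies T(x) ~ x² ln x/(β+1) as x → ∞, where γ_x = 1/w_x and π_x = w_{x-1} + w_x. -/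
section Helpers17
open Filter Asymptotics Real Finset Topology Set


lemma lemRatioCast : Tendsto (fun n : ℕ => ((n:ℝ)+1)/n) atTop (𝓝 1) := by
  have h : Tendsto (fun n : ℕ => 1 + ((n:ℝ))⁻¹) atTop (𝓝 (1+0)) :=
    tendsto_const_nhds.add (tendsto_inv_atTop_zero.comp tendsto_natCast_atTop_atTop)
  rw [add_zero] at h
  refine h.congr' ?_
  filter_upwards [eventually_ge_atTop 1] with n hn
  have : (0:ℝ) < n := by exact_mod_cast hn
  field_simp

lemma lemRatioCast' : Tendsto (fun n : ℕ => (n:ℝ)/((n:ℝ)+1)) atTop (𝓝 1) := by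
  have h := lemRatioCast.inv₀ one_ne_zero
  rw [inv_one] at h
  refine h.congr' ?_
  filter_upwards [eventually_ge_atTop 1] with n hn
  have : (0:ℝ) < n := by exact_mod_cast hn
  simp [one_div]

lemma lemLogRatio : Tendsto (fun n : ℕ => Real.log (n+1) / Real.log n) atTop (𝓝 1) := by
  have hnum : Tendsto (fun n : ℕ => Real.log (((n:ℝ)+1)/n)) atTop (𝓝 0) := by
    have := (Real.continuousAt_log one_ne_zero).tendsto.comp lemRatioCast
    rw [Real.log_one] at this; exact this
  have hlog : Tendsto (fun n : ℕ => Real.log n) atTop atTop :=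
    Real.tendsto_log_atTop.comp tendsto_natCast_atTop_atTop
  have h : Tendsto (fun n : ℕ => 1 + Real.log (((n:ℝ)+1)/n) / Real.log n) atTop (𝓝 (1+0)) :=
    tendsto_const_nhds.add (hnum.div_atTop hlog)
  rw [add_zero] at h
  refine h.congr' ?_
  filter_upwards [eventually_ge_atTop 2] with n hn
  have h0 : (0:ℝ) < n := by exact_mod_cast Nat.lt_of_lt_of_le (by norm_num) hn
  have h1 : (1:ℝ) < n := by exact_mod_cast hn
  have hl : Real.log n ≠ 0 := ne_of_gt (Real.log_pos h1)
  rw [Real.log_div (by linarith) (ne_of_gt h0)]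
  field_simp
  ring

lemma lemLogRatioRpow (e : ℝ) :
    Tendsto (fun n : ℕ => (Real.log (n+1) / Real.log n) ^ e) atTop (𝓝 1) := by
  have := lemLogRatio.rpow_const (p := e) (Or.inl one_ne_zero)
  simpa using this

lemma lemRpowBetween {r R e : ℝ} (h1 : 1 ≤ r) (h2 : r ≤ R) :
    min 1 (R^e) ≤ r^e ∧ r^e ≤ max 1 (R^e) := by
  rcases le_or_gt 0 e with he | he
  · constructor
    · calc min 1 (R^e) ≤ 1 := min_le_left _ _
        _ = 1 ^ e := (Real.one_rpow e).symm
        _ ≤ r ^ e := Real.rpow_le_rpow zero_le_one h1 he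
    · exact le_trans (Real.rpow_le_rpow (by linarith) h2 he) (le_max_right _ _)
  · constructor
    · calc min 1 (R^e) ≤ R^e := min_le_right _ _
        _ ≤ r ^ e := Real.rpow_le_rpow_of_nonpos (by linarith) h2 he.le
    · calc r ^ e ≤ 1 ^ e := Real.rpow_le_rpow_of_nonpos one_pos h1 he.le
        _ = 1 := Real.one_rpow e
        _ ≤ max 1 (R^e) := le_max_left _ _

lemma auxSumEquiv {f G : ℕ → ℝ} (h : f ~[atTop] (fun n => G (n+1) - G n))
    (hmono : Monotone G) (hG0 : G 0 = 0) (htop : Tendsto G atTop atTop) :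
    (fun n => ∑ i ∈ range n, f i) ~[atTop] G := by
  have hg : ∀ i, 0 ≤ G (i+1) - G i := fun i => sub_nonneg.2 (hmono (Nat.le_succ i))
  have hsum : ∀ n, ∑ i ∈ range n, (G (i+1) - G i) = G n := by
    intro n; rw [Finset.sum_range_sub, hG0, sub_zero]
  have h'g : Tendsto (fun n => ∑ i ∈ range n, (G (i+1) - G i)) atTop atTop := by
    simpa only [hsum] using htop
  have hlo : (fun n => f n - (G (n+1) - G n)) =o[atTop] (fun n => G (n+1) - G n) := h.isLittleO
  have h2 := hlo.sum_range hg h'g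
  have h3 : (fun n => (∑ i ∈ range n, f i) - G n) =o[atTop] G := by
    refine h2.congr' ?_ ?_
    · filter_upwards with n
      rw [Finset.sum_sub_distrib, hsum]
    · filter_upwards with n using hsum n
  exact h3


lemma lemHDeriv (β : ℝ) (hβ : -1 < β) {x : ℝ} (hx : 1 < x) :
    HasDerivAt (fun t : ℝ => (Real.log t)^(β+1) / (β+1)) ((Real.log x)^β / x) x := by
  have hx0 : x ≠ 0 := by linarith
  have hlogpos : 0 < Real.log x := Real.log_pos hx
  have hlog : HasDerivAt Real.log x⁻¹ x := Real.hasDerivAt_log hx0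
  have hpow : HasDerivAt (fun y : ℝ => y ^ (β+1)) ((β+1) * (Real.log x) ^ (β+1-1)) (Real.log x) :=
    Real.hasDerivAt_rpow_const (Or.inl (ne_of_gt hlogpos))
  have hcomp := hpow.comp x hlog
  have h := hcomp.div_const (β+1)
  have hne : β + 1 ≠ 0 := by linarith
  refine h.congr_deriv ?_
  have h2 : β + 1 - 1 = β := by ring
  rw [h2]
  field_simp

lemma lemHDelta (β : ℝ) (hβ : -1 < β) (n : ℕ) (hn : 2 ≤ n) :
    ∃ c : ℝ, (n:ℝ) < c ∧ c < (n:ℝ)+1 ∧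
      (Real.log ((n:ℝ)+1))^(β+1)/(β+1) - (Real.log n)^(β+1)/(β+1) = (Real.log c)^β / c := by
  have h1 : (1:ℝ) < n := by exact_mod_cast hn
  have hab : (n:ℝ) < (n:ℝ)+1 := by linarith
  have hcont : ContinuousOn (fun t : ℝ => (Real.log t)^(β+1) / (β+1)) (Icc (n:ℝ) ((n:ℝ)+1)) := by
    intro x hx
    exact (lemHDeriv β hβ (lt_of_lt_of_le h1 hx.1)).continuousAt.continuousWithinAt
  obtain ⟨c, hc, hceq⟩ := exists_hasDerivAt_eq_slope
    (fun t : ℝ => (Real.log t)^(β+1) / (β+1)) (fun x => (Real.log x)^β / x) hab hcont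
    (fun x hx => lemHDeriv β hβ (lt_of_lt_of_le h1 (le_of_lt hx.1)))
  refine ⟨c, hc.1, hc.2, ?_⟩
  rw [hceq]
  simp

lemma lemGDeriv (β : ℝ) {x : ℝ} (hx : 0 < x) :
    HasDerivAt (fun t : ℝ => t^2 * Real.log t / (β+1)) ((2*x*Real.log x + x)/(β+1)) x := by
  have hlog : HasDerivAt Real.log x⁻¹ x := Real.hasDerivAt_log (ne_of_gt hx)
  have hpow : HasDerivAt (fun t : ℝ => t^2) (2*x) x := by
    simpa using hasDerivAt_pow 2 x
  have h := ((hpow.mul hlog).div_const (β+1))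
  refine h.congr_deriv ?_
  field_simp

lemma lemGDelta (β : ℝ) (n : ℕ) (hn : 2 ≤ n) :
    ∃ c : ℝ, (n:ℝ) < c ∧ c < (n:ℝ)+1 ∧
      ((n:ℝ)+1)^2 * Real.log ((n:ℝ)+1)/(β+1) - (n:ℝ)^2 * Real.log n/(β+1)
        = (2*c*Real.log c + c)/(β+1) := by
  have h1 : (0:ℝ) < n := by exact_mod_cast Nat.lt_of_lt_of_le (by norm_num) hn
  have hab : (n:ℝ) < (n:ℝ)+1 := by linarith
  have hcont : ContinuousOn (fun t : ℝ => t^2 * Real.log t / (β+1)) (Icc (n:ℝ) ((n:ℝ)+1)) := by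
    intro x hx
    exact (lemGDeriv β (lt_of_lt_of_le h1 hx.1)).continuousAt.continuousWithinAt
  obtain ⟨c, hc, hceq⟩ := exists_hasDerivAt_eq_slope
    (fun t : ℝ => t^2 * Real.log t / (β+1)) (fun x => (2*x*Real.log x + x)/(β+1)) hab hcont
    (fun x hx => lemGDeriv β (lt_of_lt_of_le h1 (le_of_lt hx.1)))
  refine ⟨c, hc.1, hc.2, ?_⟩
  rw [hceq]
  simp


lemma lemInvTwoLog : Tendsto (fun n : ℕ => ((n:ℝ)+1)/(2*(n:ℝ)*Real.log n)) atTop (𝓝 0) := by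
  have hlog : Tendsto (fun n : ℕ => 2 * Real.log n) atTop atTop :=
    (Real.tendsto_log_atTop.comp tendsto_natCast_atTop_atTop).const_mul_atTop (by norm_num)
  have h := lemRatioCast.div_atTop hlog
  refine h.congr' ?_
  filter_upwards [eventually_ge_atTop 2] with n hn
  have h0 : (0:ℝ) < n := by exact_mod_cast Nat.lt_of_lt_of_le (by norm_num) hn
  have h1 : (1:ℝ) < n := by exact_mod_cast hn
  have hl : (0:ℝ) < Real.log n := Real.log_pos h1
  rw [div_div]
  ring_nf

lemma lemHRatio (β : ℝ) (hβ : -1 < β) :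
    Tendsto (fun n : ℕ =>
      ((Real.log ((n:ℝ)+1))^(β+1)/(β+1) - (Real.log n)^(β+1)/(β+1))
        / ((n:ℝ)⁻¹ * (Real.log n)^β)) atTop (𝓝 1) := by
  have hlow : Tendsto (fun n : ℕ =>
      min 1 ((Real.log (n+1) / Real.log n)^β) * ((n:ℝ)/((n:ℝ)+1))) atTop (𝓝 1) := by
    have := ((tendsto_const_nhds : Tendsto (fun _ : ℕ => (1:ℝ)) atTop (𝓝 1)).min (lemLogRatioRpow β)).mul lemRatioCast'
    simpa using this
  have hup : Tendsto (fun n : ℕ =>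
      max 1 ((Real.log (n+1) / Real.log n)^β)) atTop (𝓝 1) := by
    have := (tendsto_const_nhds : Tendsto (fun _ : ℕ => (1:ℝ)) atTop (𝓝 1)).max (lemLogRatioRpow β)
    simpa using this
  refine tendsto_of_tendsto_of_tendsto_of_le_of_le' hlow hup ?_ ?_
  · filter_upwards [eventually_ge_atTop 2] with n hn
    obtain ⟨c, hc1, hc2, hceq⟩ := lemHDelta β hβ n hn
    have h1 : (1:ℝ) < n := by exact_mod_cast hn
    have h0 : (0:ℝ) < n := by linarith
    have hlogn : (0:ℝ) < Real.log n := Real.log_pos h1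
    have hc0 : (0:ℝ) < c := lt_trans h0 hc1
    have hlogc : Real.log n ≤ Real.log c := Real.log_le_log h0 hc1.le
    have hlogc2 : Real.log c ≤ Real.log ((n:ℝ)+1) := Real.log_le_log hc0 hc2.le
    have hr1 : 1 ≤ Real.log c / Real.log n := (one_le_div hlogn).2 hlogc
    have hrR : Real.log c / Real.log n ≤ Real.log ((n:ℝ)+1) / Real.log n := by gcongr
    have hb := lemRpowBetween (e := β) hr1 hrR
    have heq : ((Real.log ((n:ℝ)+1))^(β+1)/(β+1) - (Real.log n)^(β+1)/(β+1))
        / ((n:ℝ)⁻¹ * (Real.log n)^β)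
        = (Real.log c / Real.log n)^β * ((n:ℝ)/c) := by
      rw [hceq, Real.div_rpow (le_trans hlogn.le hlogc) hlogn.le]
      simp only [div_eq_mul_inv, mul_inv, inv_inv]
      ring
    rw [heq]
    have hfrac : (n:ℝ)/((n:ℝ)+1) ≤ (n:ℝ)/c := div_le_div_of_nonneg_left h0.le hc0 hc2.le
    refine mul_le_mul hb.1 hfrac (by positivity) ?_
    have hmin : (0:ℝ) ≤ min 1 ((Real.log ((n:ℝ)+1) / Real.log n)^β) :=
      le_min zero_le_one (Real.rpow_nonneg (div_nonneg (by linarith [hlogn, hlogc, hlogc2]) hlogn.le) β)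
    exact le_trans hmin hb.1
  · filter_upwards [eventually_ge_atTop 2] with n hn
    obtain ⟨c, hc1, hc2, hceq⟩ := lemHDelta β hβ n hn
    have h1 : (1:ℝ) < n := by exact_mod_cast hn
    have h0 : (0:ℝ) < n := by linarith
    have hlogn : (0:ℝ) < Real.log n := Real.log_pos h1
    have hc0 : (0:ℝ) < c := lt_trans h0 hc1
    have hlogc : Real.log n ≤ Real.log c := Real.log_le_log h0 hc1.le
    have hlogc2 : Real.log c ≤ Real.log ((n:ℝ)+1) := Real.log_le_log hc0 hc2.le
    have hr1 : 1 ≤ Real.log c / Real.log n := (one_le_div hlogn).2 hlogc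
    have hrR : Real.log c / Real.log n ≤ Real.log ((n:ℝ)+1) / Real.log n := by gcongr
    have hb := lemRpowBetween (e := β) hr1 hrR
    have heq : ((Real.log ((n:ℝ)+1))^(β+1)/(β+1) - (Real.log n)^(β+1)/(β+1))
        / ((n:ℝ)⁻¹ * (Real.log n)^β)
        = (Real.log c / Real.log n)^β * ((n:ℝ)/c) := by
      rw [hceq, Real.div_rpow (le_trans hlogn.le hlogc) hlogn.le]
      simp only [div_eq_mul_inv, mul_inv, inv_inv]
      ring
    rw [heq]
    calc (Real.log c / Real.log n)^β * ((n:ℝ)/c)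
        ≤ max 1 ((Real.log ((n:ℝ)+1) / Real.log n)^β) * 1 := by
          refine mul_le_mul hb.2 ?_ (by positivity) ?_
          · exact (div_le_one hc0).2 hc1.le
          · exact le_trans zero_le_one (le_max_left _ _)
      _ = _ := mul_one _

lemma lemGRatio (β : ℝ) (hβ : -1 < β) :
    Tendsto (fun n : ℕ =>
      (((n:ℝ)+1)^2 * Real.log ((n:ℝ)+1)/(β+1) - (n:ℝ)^2 * Real.log n/(β+1))
        / (2*(n:ℝ)*Real.log n/(β+1))) atTop (𝓝 1) := by
  have hne : β + 1 ≠ 0 := by linarith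
  have hup : Tendsto (fun n : ℕ =>
      (((n:ℝ)+1)/n) * (Real.log (n+1) / Real.log n) + ((n:ℝ)+1)/(2*(n:ℝ)*Real.log n))
      atTop (𝓝 1) := by
    have := (lemRatioCast.mul lemLogRatio).add lemInvTwoLog
    simpa using this
  refine tendsto_of_tendsto_of_tendsto_of_le_of_le' tendsto_const_nhds hup ?_ ?_
  · filter_upwards [eventually_ge_atTop 2] with n hn
    obtain ⟨c, hc1, hc2, hceq⟩ := lemGDelta β n hn
    have h1 : (1:ℝ) < n := by exact_mod_cast hn
    have h0 : (0:ℝ) < n := by linarith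
    have hlogn : (0:ℝ) < Real.log n := Real.log_pos h1
    have hc0 : (0:ℝ) < c := lt_trans h0 hc1
    have hlogc : Real.log n ≤ Real.log c := Real.log_le_log h0 hc1.le
    have heq : (((n:ℝ)+1)^2 * Real.log ((n:ℝ)+1)/(β+1) - (n:ℝ)^2 * Real.log n/(β+1))
        / (2*(n:ℝ)*Real.log n/(β+1)) = (2*c*Real.log c + c)/(2*(n:ℝ)*Real.log n) := by
      rw [hceq]
      have hden : 2*(n:ℝ)*Real.log n ≠ 0 := by
        have := mul_pos (mul_pos (two_pos (α := ℝ)) h0) hlogn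
        exact ne_of_gt this
      field_simp
    rw [heq]
    have hden : (0:ℝ) < 2*(n:ℝ)*Real.log n := mul_pos (mul_pos two_pos h0) hlogn
    rw [le_div_iff₀ hden]
    have key : (n:ℝ) * Real.log n ≤ c * Real.log c :=
      mul_le_mul hc1.le hlogc hlogn.le hc0.le
    nlinarith [hc0]
  · filter_upwards [eventually_ge_atTop 2] with n hn
    obtain ⟨c, hc1, hc2, hceq⟩ := lemGDelta β n hn
    have h1 : (1:ℝ) < n := by exact_mod_cast hn
    have h0 : (0:ℝ) < n := by linarith
    have hlogn : (0:ℝ) < Real.log n := Real.log_pos h1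
    have hc0 : (0:ℝ) < c := lt_trans h0 hc1
    have hlogc2 : Real.log c ≤ Real.log ((n:ℝ)+1) := Real.log_le_log hc0 hc2.le
    have hlogn1 : (0:ℝ) ≤ Real.log ((n:ℝ)+1) := le_trans (Real.log_nonneg h1.le) (Real.log_le_log h0 (by linarith))
    have heq : (((n:ℝ)+1)^2 * Real.log ((n:ℝ)+1)/(β+1) - (n:ℝ)^2 * Real.log n/(β+1))
        / (2*(n:ℝ)*Real.log n/(β+1)) = (2*c*Real.log c + c)/(2*(n:ℝ)*Real.log n) := by
      rw [hceq]
      have hden : 2*(n:ℝ)*Real.log n ≠ 0 := by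
        have := mul_pos (mul_pos (two_pos (α := ℝ)) h0) hlogn
        exact ne_of_gt this
      field_simp
    rw [heq]
    have hden : (0:ℝ) < 2*(n:ℝ)*Real.log n := mul_pos (mul_pos two_pos h0) hlogn
    have hnum : 2*c*Real.log c + c ≤ 2*((n:ℝ)+1)*Real.log ((n:ℝ)+1) + ((n:ℝ)+1) := by
      have hlogc0 : 0 ≤ Real.log c := le_trans (Real.log_nonneg h1.le) (Real.log_le_log h0 hc1.le)
      have key : c * Real.log c ≤ ((n:ℝ)+1) * Real.log ((n:ℝ)+1) :=
        mul_le_mul hc2.le hlogc2 hlogc0 (by linarith)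
      linarith
    have hub := (div_le_div_iff_of_pos_right hden).2 hnum
    refine le_trans hub (le_of_eq ?_)
    field_simp

end Helpers17

section Main17
open Filter Asymptotics Finset Topology

theorem stmt17 (β : ℝ) (hβ : -1 < β) (w γ π T : ℕ → ℝ)
    (hw0 : w 0 = 1) (hw1 : w 1 = 1)
    (hw : ∀ x, 2 ≤ x → w x = (x : ℝ)⁻¹ * (Real.log x) ^ β)
    (hγ0 : γ 0 = 1)
    (hγ : ∀ x, 1 ≤ x → γ x = ∏ i ∈ Finset.Icc 1 x, w (i - 1) / w i)
    (hπ0 : π 0 = w 0)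
    (hπ : ∀ x, 1 ≤ x → π x = w (x - 1) + w x)
    (hT : ∀ x, T x = ∑ i ∈ Finset.range x, γ i * ∑ j ∈ Finset.range (i + 1), π j) :
    Filter.Tendsto (fun x : ℕ =>
        T x / ((x : ℝ) ^ 2 * Real.log x / (β + 1)))
      Filter.atTop (nhds 1) := by
  have hβ1 : (0:ℝ) < β + 1 := by linarith
  have hne : β + 1 ≠ 0 := ne_of_gt hβ1
  have hwpos : ∀ n, 0 < w n := by
    intro n
    match n with
    | 0 => rw [hw0]; norm_num
    | 1 => rw [hw1]; norm_num
    | (m+2) =>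
      rw [hw _ (by omega)]
      have h1 : (1:ℝ) < ((m+2:ℕ):ℝ) := by exact_mod_cast (by omega : 1 < m+2)
      exact mul_pos (inv_pos.2 (by linarith)) (Real.rpow_pos_of_pos (Real.log_pos h1) β)
  have hγinv : ∀ n, γ n = (w n)⁻¹ := by
    intro n
    induction n with
    | zero => rw [hγ0, hw0]; norm_num
    | succ k ih =>
      rw [hγ (k+1) (by omega), Finset.prod_Icc_succ_top (by omega : 1 ≤ k+1)]
      simp only [Nat.add_sub_cancel]
      rcases Nat.eq_zero_or_pos k with hk | hk
      · subst hk
        simp [hw0, hw1]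
      · rw [← hγ k hk, ih]
        have := (hwpos k).ne'
        have := (hwpos (k+1)).ne'
        field_simp
  have hS : ∀ i, ∑ j ∈ Finset.range (i+1), π j
      = 2 * (∑ j ∈ Finset.range (i+1), w j) - w i := by
    intro i
    induction i with
    | zero => simp [hπ0]; ring
    | succ k ih =>
      rw [Finset.sum_range_succ, ih, hπ (k+1) (by omega),
        Finset.sum_range_succ (f := w) (n := k+1)]
      simp only [Nat.add_sub_cancel]
      ring
  have hlogpos : ∀ n : ℕ, 2 ≤ n → (0:ℝ) < Real.log n := fun n hn =>
    Real.log_pos (by exact_mod_cast (by omega : 1 < n))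
  have hnpos : ∀ n : ℕ, 2 ≤ n → (0:ℝ) < (n:ℝ) := fun n hn => by
    exact_mod_cast (by omega : 0 < n)
  have hlognn : ∀ n : ℕ, (0:ℝ) ≤ Real.log n := by
    intro n
    rcases Nat.eq_zero_or_pos n with h | h
    · subst h; simp
    · exact Real.log_nonneg (by exact_mod_cast h)
  have hlogmono : ∀ a b : ℕ, a ≤ b → Real.log a ≤ Real.log b := by
    intro a b hab
    rcases Nat.eq_zero_or_pos a with h | h
    · subst h; simpa using hlognn b
    · exact Real.log_le_log (by exact_mod_cast h) (by exact_mod_cast hab)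
  -- w ~ ΔHn where Hn n = (log n)^(β+1)/(β+1)
  have hwhat : ∀ᶠ n : ℕ in atTop, (n:ℝ)⁻¹ * (Real.log n)^β ≠ 0 := by
    filter_upwards [eventually_ge_atTop 2] with n hn
    have := hlogpos n hn
    have := hnpos n hn
    positivity
  have hHd : (fun n : ℕ => (Real.log (n+1:ℕ))^(β+1)/(β+1) - (Real.log n)^(β+1)/(β+1))
      ~[atTop] (fun n : ℕ => (n:ℝ)⁻¹ * (Real.log n)^β) := by
    rw [isEquivalent_iff_tendsto_one hwhat]
    refine (lemHRatio β hβ).congr' ?_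
    filter_upwards with n
    simp only [Pi.div_apply]
    push_cast
    ring_nf
  have hwe : (fun n : ℕ => (n:ℝ)⁻¹ * (Real.log n)^β) =ᶠ[atTop] w := by
    filter_upwards [eventually_ge_atTop 2] with n hn
    exact (hw n hn).symm
  have hwEquiv : w ~[atTop]
      (fun n : ℕ => (Real.log (n+1:ℕ))^(β+1)/(β+1) - (Real.log n)^(β+1)/(β+1)) :=
    (hHd.congr_right hwe).symm
  -- Wsum ~ Hn
  have hHmono : Monotone (fun n : ℕ => (Real.log n)^(β+1)/(β+1)) := by
    intro a b hab
    have h1 : (Real.log a)^(β+1) ≤ (Real.log b)^(β+1) :=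
      Real.rpow_le_rpow (hlognn a) (hlogmono a b hab) hβ1.le
    exact (div_le_div_iff_of_pos_right hβ1).2 h1
  have hH0 : (fun n : ℕ => (Real.log n)^(β+1)/(β+1)) 0 = 0 := by
    simp [Real.zero_rpow hne]
  have hHtop : Tendsto (fun n : ℕ => (Real.log n)^(β+1)/(β+1)) atTop atTop :=
    ((tendsto_rpow_atTop hβ1).comp
      (Real.tendsto_log_atTop.comp tendsto_natCast_atTop_atTop)).atTop_div_const hβ1
  have hWH : (fun n : ℕ => ∑ i ∈ range n, w i)
      ~[atTop] (fun n : ℕ => (Real.log n)^(β+1)/(β+1)) :=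
    auxSumEquiv hwEquiv hHmono hH0 hHtop
  have hHne : ∀ᶠ n : ℕ in atTop, (Real.log n)^(β+1)/(β+1) ≠ 0 := by
    filter_upwards [eventually_ge_atTop 2] with n hn
    have := hlogpos n hn
    exact ne_of_gt (div_pos (Real.rpow_pos_of_pos this (β+1)) hβ1)
  have hWdiv : Tendsto (fun n : ℕ =>
      (∑ i ∈ range n, w i) / ((Real.log n)^(β+1)/(β+1))) atTop (𝓝 1) :=
    (isEquivalent_iff_tendsto_one hHne).1 hWH
  have hWdiv' : Tendsto (fun n : ℕ =>
      (∑ i ∈ range (n+1), w i) / ((Real.log (n+1:ℕ))^(β+1)/(β+1))) atTop (𝓝 1) :=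
    hWdiv.comp (tendsto_add_atTop_nat 1)
  -- bn facts
  have hbtop : Tendsto (fun n : ℕ => 2*(n:ℝ)*Real.log n/(β+1)) atTop atTop := by
    have h1 : Tendsto (fun n : ℕ => (n:ℝ) * Real.log n) atTop atTop :=
      tendsto_natCast_atTop_atTop.atTop_mul_atTop₀
        (Real.tendsto_log_atTop.comp tendsto_natCast_atTop_atTop)
    have h2 := (h1.const_mul_atTop (two_pos (α := ℝ))).atTop_div_const hβ1
    refine h2.congr fun n => by ring
  have h1bn : Tendsto (fun i : ℕ => 1 / (2*(i:ℝ)*Real.log i/(β+1))) atTop (𝓝 0) := by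
    have := tendsto_inv_atTop_zero.comp hbtop
    refine this.congr fun n => ?_
    simp [one_div]
  have hbne : ∀ᶠ n : ℕ in atTop, 2*(n:ℝ)*Real.log n/(β+1) ≠ 0 := by
    filter_upwards [eventually_ge_atTop 2] with n hn
    have := hlogpos n hn
    have := hnpos n hn
    positivity
  -- f ~ bn
  have hkey : Tendsto (fun i : ℕ =>
      ((∑ j ∈ range (i+1), w j) / ((Real.log (i+1:ℕ))^(β+1)/(β+1)))
        * ((Real.log (i+1) / Real.log i))^(β+1)
        - 1 / (2*(i:ℝ)*Real.log i/(β+1))) atTop (𝓝 (1*1 - 0)) :=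
    (hWdiv'.mul (lemLogRatioRpow (β+1))).sub h1bn
  rw [show (1:ℝ)*1 - 0 = 1 by ring] at hkey
  have hfb : Tendsto (fun i : ℕ =>
      (γ i * ∑ j ∈ range (i+1), π j) / (2*(i:ℝ)*Real.log i/(β+1))) atTop (𝓝 1) := by
    refine hkey.congr' ?_
    filter_upwards [eventually_ge_atTop 2] with i hi
    rw [hγinv, hS, hw i hi]
    have hL : (0:ℝ) < Real.log i := hlogpos i hi
    have hi0 : (0:ℝ) < (i:ℝ) := hnpos i hi
    have hL' : (0:ℝ) < Real.log ((i:ℝ)+1) := lt_of_lt_of_le hL (Real.log_le_log hi0 (by linarith))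
    have hcast : ((i+1:ℕ):ℝ) = (i:ℝ)+1 := by push_cast; ring
    rw [hcast]
    rw [Real.div_rpow hL'.le hL.le]
    rw [Real.rpow_add_one (ne_of_gt hL) β]
    have hLb : (0:ℝ) < (Real.log i)^β := Real.rpow_pos_of_pos hL β
    have hL'b : (0:ℝ) < (Real.log ((i:ℝ)+1))^(β+1) := Real.rpow_pos_of_pos hL' (β+1)
    field_simp
  have hfEquiv : (fun i : ℕ => γ i * ∑ j ∈ range (i+1), π j)
      ~[atTop] (fun n : ℕ => 2*(n:ℝ)*Real.log n/(β+1)) :=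
    (isEquivalent_iff_tendsto_one hbne).2 hfb
  -- ΔGn ~ bn
  have hGd : (fun n : ℕ => ((n+1:ℕ):ℝ)^2 * Real.log (n+1:ℕ)/(β+1) - (n:ℝ)^2 * Real.log n/(β+1))
      ~[atTop] (fun n : ℕ => 2*(n:ℝ)*Real.log n/(β+1)) := by
    rw [isEquivalent_iff_tendsto_one hbne]
    refine (lemGRatio β hβ).congr' ?_
    filter_upwards with n
    simp only [Pi.div_apply]
    push_cast
    ring_nf
  have hfG : (fun i : ℕ => γ i * ∑ j ∈ range (i+1), π j)
      ~[atTop] (fun n : ℕ => ((n+1:ℕ):ℝ)^2 * Real.log (n+1:ℕ)/(β+1) - (n:ℝ)^2 * Real.log n/(β+1)) :=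
    hfEquiv.trans hGd.symm
  -- sum ~ Gn
  have hGmono : Monotone (fun n : ℕ => (n:ℝ)^2 * Real.log n/(β+1)) := by
    intro a b hab
    have h1 : (a:ℝ)^2 * Real.log a ≤ (b:ℝ)^2 * Real.log b := by
      refine mul_le_mul ?_ (hlogmono a b hab) (hlognn a) (by positivity)
      have h2 : (a:ℝ) ≤ (b:ℝ) := by exact_mod_cast hab
      exact pow_le_pow_left₀ (by positivity) h2 2
    dsimp only
    exact (div_le_div_iff_of_pos_right hβ1).2 h1
  have hG0 : (fun n : ℕ => (n:ℝ)^2 * Real.log n/(β+1)) 0 = 0 := by simp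
  have hGtop : Tendsto (fun n : ℕ => (n:ℝ)^2 * Real.log n/(β+1)) atTop atTop := by
    have h1 : Tendsto (fun n : ℕ => (n:ℝ)^2) atTop atTop :=
      (tendsto_pow_atTop (by norm_num)).comp tendsto_natCast_atTop_atTop
    exact ((h1.atTop_mul_atTop₀
      (Real.tendsto_log_atTop.comp tendsto_natCast_atTop_atTop))).atTop_div_const hβ1
  have hsum : (fun n : ℕ => ∑ i ∈ range n, (γ i * ∑ j ∈ range (i+1), π j))
      ~[atTop] (fun n : ℕ => (n:ℝ)^2 * Real.log n/(β+1)) :=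
    auxSumEquiv hfG hGmono hG0 hGtop
  have hTeq : T = fun n : ℕ => ∑ i ∈ range n, (γ i * ∑ j ∈ range (i+1), π j) :=
    funext hT
  have hGne : ∀ᶠ n : ℕ in atTop, (n:ℝ)^2 * Real.log n/(β+1) ≠ 0 := by
    filter_upwards [eventually_ge_atTop 2] with n hn
    have := hlogpos n hn
    have := hnpos n hn
    positivity
  have hfinal := (isEquivalent_iff_tendsto_one hGne).1 (hTeq ▸ hsum)
  exact hfinal

end Main17
end
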